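/- Let F be a C¹ function on a Banach manifold with Finsler metric, X a vector field satisfying ‖X(p)‖² ≤ ε₁²ε₂ · dF_p(X(p)) for all p, and φ_t the local flow of −X. Then for t₁ < t₂ in the domain of the flow through p, dist(φ_{t₁}(p), φ_{t₂}(p))² ≤ ε₁²ε₂ (t₂−t₁)(F(φ_{t₁}(p)) − F(φ_{t₂}(p))). Consequently, if F is bounded below and the Finsler metric is complete, the flow of −X is positively complete. -/

import Mathlib

open Filter

/-- Uhlenbeck's completeness estimate: if `φ` is a flow line of `−X` where
`‖X(p)‖² ≤ ε₁²ε₂ dF_p(X(p))`, i.e. `‖φ'(t)‖² ≤ ε₁²ε₂ ·(−(F∘φ)'(t))`, then for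
`t₁ < t₂` one has
`dist(φ(t₁),φ(t₂))² ≤ ε₁²ε₂ (t₂−t₁)(F(φ(t₁)) − F(φ(t₂)))`; consequently, if
`F` is bounded below, `φ(tₙ)` is Cauchy along any monotone sequence `tₙ → b`,
so the flow of `−X` is positively complete. -/
theorem stmt19 {E : Type*} [NormedAddCommGroup E] [NormedSpace ℝ E]
    (F : E → ℝ) (φ : ℝ → E) (g : ℝ → ℝ) (ε₁ ε₂ : ℝ) (hε₁ : 0 < ε₁) (hε₂ : 0 < ε₂)
    (hφ : Differentiable ℝ φ)
    (hFφ : ∀ t, HasDerivAt (fun s => F (φ s)) (g t) t)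
    (hX : ∀ t, ‖deriv φ t‖^2 ≤ ε₁^2 * ε₂ * (-(g t))) :
    (∀ t₁ t₂ : ℝ, t₁ < t₂ →
      dist (φ t₁) (φ t₂) ^ 2 ≤ ε₁^2 * ε₂ * (t₂ - t₁) * (F (φ t₁) - F (φ t₂))) ∧
    ((∃ m : ℝ, ∀ x, m ≤ F x) →
      ∀ (b : ℝ) (t : ℕ → ℝ), StrictMono t → Tendsto t atTop (nhds b) →
        CauchySeq (fun n => φ (t n))) := by
  set C := ε₁ ^ 2 * ε₂ with hCdef
  have hCpos : 0 < C := by positivity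
  have hg0 : ∀ s, g s ≤ 0 := by
    intro s
    nlinarith [hX s, sq_nonneg ‖deriv φ s‖]
  have hanti : Antitone (fun s => F (φ s)) := by
    apply antitone_of_deriv_nonpos
    · intro s; exact (hFφ s).differentiableAt
    · intro s; rw [(hFφ s).deriv]; exact hg0 s
  -- key parametrized estimate
  have key : ∀ t₁ t₂ : ℝ, t₁ < t₂ → ∀ l : ℝ, 0 < l →
      2 * l * dist (φ t₁) (φ t₂) ≤
        l ^ 2 * C * (F (φ t₁) - F (φ t₂)) + (t₂ - t₁) := by
    intro t₁ t₂ h12 l hl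
    set B : ℝ → ℝ := fun s => l ^ 2 * C * (F (φ t₁) - F (φ s)) + (s - t₁) with hBdef
    have hB : ∀ x, HasDerivAt B (l ^ 2 * C * (-(g x)) + 1) x := by
      intro x
      have h1 : HasDerivAt (fun s => F (φ t₁) - F (φ s)) (0 - g x) x :=
        (hasDerivAt_const x (F (φ t₁))).sub (hFφ x)
      have h2 := (h1.const_mul (l ^ 2 * C)).add ((hasDerivAt_id x).sub_const t₁)
      simp only [zero_sub] at h2
      exact h2
    have hf : ContinuousOn (fun s => (2 * l) • (φ s - φ t₁)) (Set.Icc t₁ t₂) :=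
      ((hφ.continuous.sub continuous_const).const_smul (2 * l)).continuousOn
    have hf' : ∀ x ∈ Set.Ico t₁ t₂,
        HasDerivWithinAt (fun s => (2 * l) • (φ s - φ t₁))
          ((2 * l) • deriv φ x) (Set.Ici x) x := by
      intro x _
      exact (((hφ x).hasDerivAt.sub_const (φ t₁)).const_smul (2 * l)).hasDerivWithinAt
    have ha : ‖(2 * l) • (φ t₁ - φ t₁)‖ ≤ B t₁ := by
      simp [hBdef]
    have bound : ∀ x ∈ Set.Ico t₁ t₂,
        ‖(2 * l) • deriv φ x‖ ≤ l ^ 2 * C * (-(g x)) + 1 := by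
      intro x _
      rw [norm_smul, Real.norm_eq_abs, abs_of_pos (by positivity : (0:ℝ) < 2 * l)]
      have h1 := mul_le_mul_of_nonneg_left (hX x) (sq_nonneg l)
      nlinarith [sq_nonneg (l * ‖deriv φ x‖ - 1), norm_nonneg (deriv φ x)]
    have := image_norm_le_of_norm_deriv_right_le_deriv_boundary hf hf' ha hB bound
      (Set.right_mem_Icc.mpr h12.le)
    rw [norm_smul, Real.norm_eq_abs, abs_of_pos (by positivity : (0:ℝ) < 2 * l)] at this
    rw [dist_eq_norm, norm_sub_rev]
    simpa [hBdef] using this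
  have main : ∀ t₁ t₂ : ℝ, t₁ < t₂ →
      dist (φ t₁) (φ t₂) ^ 2 ≤ C * (t₂ - t₁) * (F (φ t₁) - F (φ t₂)) := by
    intro t₁ t₂ h12
    set d := dist (φ t₁) (φ t₂) with hd
    have hd0 : 0 ≤ d := dist_nonneg
    set A := C * (F (φ t₁) - F (φ t₂)) with hA
    have hA0 : 0 ≤ A := by
      have := hanti h12.le
      have hF : 0 ≤ F (φ t₁) - F (φ t₂) := by simpa using sub_nonneg.mpr this
      positivity
    have hkey : ∀ l : ℝ, 0 < l → 2 * l * d ≤ l ^ 2 * A + (t₂ - t₁) := by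
      intro l hl
      have := key t₁ t₂ h12 l hl
      nlinarith [this]
    have hΔ : 0 < t₂ - t₁ := by linarith
    rcases eq_or_lt_of_le hA0 with hA0' | hApos
    · -- A = 0 : show d = 0
      have hd0' : d = 0 := by
        by_contra hne
        have hdp : 0 < d := lt_of_le_of_ne hd0 (Ne.symm hne)
        have h := hkey ((t₂ - t₁) / d) (by positivity)
        rw [← hA0'] at h
        have heq : 2 * ((t₂ - t₁) / d) * d = 2 * (t₂ - t₁) := by
          rw [mul_assoc, div_mul_cancel₀ _ hne]
        rw [heq, mul_zero, zero_add] at h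
        linarith
      rw [hd0']
      nlinarith [hA0]
    · set l := Real.sqrt ((t₂ - t₁) / A) with hldef
      have hlpos : 0 < l := Real.sqrt_pos.mpr (by positivity)
      have hlsq : l ^ 2 = (t₂ - t₁) / A := Real.sq_sqrt (by positivity)
      have h1 := hkey l hlpos
      rw [hlsq] at h1
      have h2 : (t₂ - t₁) / A * A = t₂ - t₁ := by field_simp
      rw [h2] at h1
      -- 2 l d ≤ 2 (t₂ - t₁), so l d ≤ t₂ - t₁, so l² d² ≤ (t₂-t₁)², d² ≤ (t₂-t₁) A
      have hld : l * d ≤ t₂ - t₁ := by linarith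
      have h3 : (l * d) ^ 2 ≤ (t₂ - t₁) ^ 2 :=
        pow_le_pow_left₀ (by positivity) hld 2
      rw [mul_pow, hlsq] at h3
      calc d ^ 2 = (t₂ - t₁) / A * d ^ 2 * (A / (t₂ - t₁)) := by field_simp
        _ ≤ (t₂ - t₁) ^ 2 * (A / (t₂ - t₁)) := by
            apply mul_le_mul_of_nonneg_right h3 (by positivity)
        _ = C * (t₂ - t₁) * (F (φ t₁) - F (φ t₂)) := by
            rw [hA]; field_simp
  refine ⟨main, ?_⟩
  rintro ⟨m, hm⟩ b t ht htb
  have htle : ∀ n, t n ≤ b := fun n => ht.monotone.ge_of_tendsto htb n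
  have htlt : ∀ n, t n < b := fun n => lt_of_lt_of_le (ht (Nat.lt_succ_self n)) (htle (n + 1))
  set a : ℕ → ℝ := fun n => F (φ (t n)) with hadef
  have hanti' : Antitone a := fun n k h => hanti (ht.monotone h)
  have hacauchy : CauchySeq a := by
    have : Tendsto a atTop (nhds (⨅ n, a n)) :=
      tendsto_atTop_ciInf hanti' ⟨m, fun x ⟨n, hn⟩ => hn ▸ hm _⟩
    exact this.cauchySeq
  rw [Metric.cauchySeq_iff']
  intro ε hε
  have hK : 0 < C * (b - t 0) + 1 := by
    have := htlt 0; nlinarith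
  obtain ⟨N, hN⟩ := Metric.cauchySeq_iff'.mp hacauchy (ε ^ 2 / (C * (b - t 0) + 1))
    (by positivity)
  refine ⟨N, fun n hn => ?_⟩
  rcases eq_or_lt_of_le hn with rfl | hlt
  · simpa using hε
  · have htlt' : t N < t n := ht hlt
    have hmain := main (t N) (t n) htlt'
    have hdista : dist (a n) (a N) < ε ^ 2 / (C * (b - t 0) + 1) := hN n hn
    have haord : a n ≤ a N := hanti' hn
    have hdista' : a N - a n < ε ^ 2 / (C * (b - t 0) + 1) := by
      rw [Real.dist_eq, abs_of_nonpos (by linarith)] at hdista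
      linarith
    have hseg : t n - t N ≤ b - t 0 := by
      have h0N : t 0 ≤ t N := ht.monotone (Nat.zero_le N)
      have := htlt n
      linarith
    have hd2 : dist (φ (t N)) (φ (t n)) ^ 2 < ε ^ 2 := by
      have hF0 : 0 ≤ a N - a n := by linarith
      have h1 : C * (t n - t N) * (a N - a n) ≤ C * (b - t 0) * (a N - a n) := by
        apply mul_le_mul_of_nonneg_right _ hF0
        exact mul_le_mul_of_nonneg_left hseg hCpos.le
      have h2 : C * (b - t 0) * (a N - a n) <
          (C * (b - t 0) + 1) * (ε ^ 2 / (C * (b - t 0) + 1)) := by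
        have hCb : 0 ≤ C * (b - t 0) := by
          nlinarith [htlt 0]
        calc C * (b - t 0) * (a N - a n)
            ≤ C * (b - t 0) * (ε ^ 2 / (C * (b - t 0) + 1)) := by
              apply mul_le_mul_of_nonneg_left hdista'.le hCb
          _ < (C * (b - t 0) + 1) * (ε ^ 2 / (C * (b - t 0) + 1)) := by
              apply mul_lt_mul_of_pos_right (by linarith) (by positivity)
      have h3 : (C * (b - t 0) + 1) * (ε ^ 2 / (C * (b - t 0) + 1)) = ε ^ 2 := by
        field_simp
      calc dist (φ (t N)) (φ (t n)) ^ 2 ≤ C * (t n - t N) * (a N - a n) := hmain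
        _ ≤ C * (b - t 0) * (a N - a n) := h1
        _ < ε ^ 2 := by rw [← h3]; exact h2
    rw [dist_comm] at hd2
    nlinarith [dist_nonneg (x := φ (t n)) (y := φ (t N)), hε]
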